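/- Let Γ be a Neumaier graph with parameters (n,k,λ;a,c), let C be a regular clique of size c with nexus a, let e ∈ C, and let S be the set of neighbors of e in Γ. Then the induced subgraph of Γ on S ∖ C is regular of valency λ − a + 1; that is, every vertex of S ∖ C has exactly λ − a + 1 neighbors inside S ∖ C. -/

import Mathlib

open Finset SimpleGraph Matrix

/-- A finset `C` is a regular clique with nexus `a` in `G`: it is a clique and every
vertex outside `C` has exactly `a` neighbors in `C`. -/
def SimpleGraph.IsRegularCliqueWithNexus {V : Type*} [Fintype V] [DecidableEq V]
    (G : SimpleGraph V) [DecidableRel G.Adj] (C : Finset V) (a : ℕ) : Prop :=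
  G.IsClique (C : Set V) ∧ ∀ v ∉ C, (C.filter fun u => G.Adj v u).card = a

/-- `G` is edge-regular with parameters `(n, k, l)`: it has `n` vertices, is `k`-regular,
and any two adjacent vertices have exactly `l` common neighbors. -/
def SimpleGraph.IsEdgeRegular {V : Type*} [Fintype V] [DecidableEq V]
    (G : SimpleGraph V) [DecidableRel G.Adj] (n k l : ℕ) : Prop :=
  Fintype.card V = n ∧ G.IsRegularOfDegree k ∧
    ∀ u v : V, G.Adj u v → Fintype.card (G.commonNeighbors u v) = l

/-- `G` is a Neumaier graph with parameters `(n, k, l; a, c)`: a connected, non-complete,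
edge-regular graph with parameters `(n, k, l)` containing a regular clique of size `c`
with nexus `a ≥ 1`. -/
def SimpleGraph.IsNeumaier {V : Type*} [Fintype V] [DecidableEq V]
    (G : SimpleGraph V) [DecidableRel G.Adj] (n k l a c : ℕ) : Prop :=
  G.Connected ∧ G ≠ ⊤ ∧ G.IsEdgeRegular n k l ∧ 1 ≤ a ∧
    ∃ C : Finset V, C.card = c ∧ G.IsRegularCliqueWithNexus C a
/-- Theorem 3.3(i), first part: in a Neumaier graph with parameters (n,k,l;a,c), if C is a
regular clique with nexus a, e ∈ C, and S is the neighborhood of e, then the induced subgraph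
on S \ C is regular of valency l - a + 1. -/
theorem neumaier_induced_regular {V : Type*} [Fintype V] [DecidableEq V]
    (G : SimpleGraph V) [DecidableRel G.Adj] (n k l a c : ℕ)
    (h : G.IsNeumaier n k l a c)
    (C : Finset V) (hCcard : C.card = c) (hC : G.IsRegularCliqueWithNexus C a)
    (e : V) (he : e ∈ C) (S : Finset V) (hS : S = G.neighborFinset e) :
    ∀ v ∈ S \ C, ((((S \ C).filter fun u => G.Adj v u).card : ℤ) = (l : ℤ) - a + 1) := by
  intro v hv
  rw [mem_sdiff] at hv
  obtain ⟨hvS, hvC⟩ := hv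
  have hadj : G.Adj e v := by
    rw [hS, mem_neighborFinset] at hvS; exact hvS
  have heS : e ∉ S := by
    rw [hS, mem_neighborFinset]; exact G.irrefl
  -- neighbors of v in S number l
  have hl : (S.filter fun u => G.Adj v u).card = l := by
    rw [← h.2.2.1.2.2 e v hadj, ← Set.toFinset_card]
    congr 1
    ext w
    rw [Set.mem_toFinset]; simp [SimpleGraph.commonNeighbors, hS, mem_neighborFinset, adj_comm]
  have ha : (C.filter fun u => G.Adj v u).card = a := hC.2 v hvC
  have heC : e ∈ C.filter fun u => G.Adj v u := by
    simp [he, hadj.symm]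
  -- split filter over S
  have hsplit : (S.filter fun u => G.Adj v u) =
      ((S \ C).filter fun u => G.Adj v u) ∪ ((C.filter fun u => G.Adj v u).erase e) := by
    ext w
    simp only [mem_filter, mem_union, mem_sdiff, mem_erase]
    constructor
    · intro ⟨hwS, hwv⟩
      by_cases hwC : w ∈ C
      · exact Or.inr ⟨fun hwe => heS (hwe ▸ hwS), hwC, hwv⟩
      · exact Or.inl ⟨⟨hwS, hwC⟩, hwv⟩
    · rintro (⟨⟨hwS, _⟩, hwv⟩ | ⟨hwe, hwC, hwv⟩)
      · exact ⟨hwS, hwv⟩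
      · refine ⟨?_, hwv⟩
        rw [hS, mem_neighborFinset]
        exact hC.1 he hwC (fun h => hwe h.symm)
  have hdisj : Disjoint ((S \ C).filter fun u => G.Adj v u)
      ((C.filter fun u => G.Adj v u).erase e) := by
    rw [Finset.disjoint_left]
    intro w hw1 hw2
    rw [mem_filter, mem_sdiff] at hw1
    exact hw1.1.2 (mem_filter.mp (mem_of_mem_erase hw2)).1
  have hcard := hl
  rw [hsplit, card_union_of_disjoint hdisj, card_erase_of_mem heC, ha] at hcard
  have h1 : 1 ≤ a := h.2.2.2.1
  omega
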